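/- The join of two nonempty discrete spaces, each having at least two points, is path-connected but not simply connected. -/

import Mathlib

/-- The relation defining the topological join: `(a,b,0) ~ (a,b',0)` and `(a,b,1) ~ (a',b,1)`. -/
inductive JoinRel (A B : Type*) : A × B × unitInterval → A × B × unitInterval → Prop
  | zero (a : A) (b b' : B) : JoinRel A B (a, b, 0) (a, b', 0)
  | one (a a' : A) (b : B) : JoinRel A B (a, b, 1) (a', b, 1)

/-- The topological join `A * B`, as a quotient of `A × B × [0,1]`. -/
def TopJoin (A B : Type*) : Type _ := Quot (JoinRel A B)

instance (A B : Type*) [TopologicalSpace A] [TopologicalSpace B] :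
    TopologicalSpace (TopJoin A B) :=
  inferInstanceAs (TopologicalSpace (Quot _))

open unitInterval Complex

noncomputable section

attribute [local instance] Path.Homotopic.setoid

set_option linter.unusedSectionVars false

namespace TopJoinProofAux


/-- multiplication of elements of the unit interval -/
def mulI (c x : I) : I :=
  ⟨(c : ℝ) * x, mul_nonneg c.2.1 x.2.1, mul_le_one₀ c.2.2 x.2.1 x.2.2⟩

lemma intlike_const {X : Type*} [TopologicalSpace X] [PreconnectedSpace X]
    {w : X → ℝ} (hw : Continuous w) (h : ∀ x, ∃ n : ℤ, w x = n * (2 * Real.pi)) (x y : X) :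
    w x = w y := by
  by_contra hne
  obtain ⟨n, hn⟩ := h x
  obtain ⟨m, hm⟩ := h y
  have hpi := Real.pi_pos
  have key : ∀ (u v : X) (nu nv : ℤ), w u = nu * (2*Real.pi) → w v = nv * (2*Real.pi) →
      w u < w v → False := by
    intro u v nu nv hu hv hlt
    have hnm : (nu : ℝ) < nv := by
      rw [hu, hv] at hlt; nlinarith
    have hnm' : nu < nv := by exact_mod_cast hnm
    have hmid : (nu + 1/2 : ℝ) * (2*Real.pi) ∈ Set.Icc (w u) (w v) := by
      constructor
      · rw [hu]; nlinarith
      · rw [hv]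
        have : (nu : ℝ) + 1 ≤ nv := by exact_mod_cast hnm'
        nlinarith
    obtain ⟨z, hz⟩ := intermediate_value_univ u v hw hmid
    obtain ⟨k, hk⟩ := h z
    rw [hk] at hz
    have : (2*nu + 1 : ℝ) = 2*k := by nlinarith
    have : 2*nu + 1 = 2*k := by exact_mod_cast this
    omega
  rcases lt_or_gt_of_ne hne with hlt | hlt
  · exact key x y n m hn hm hlt
  · exact key y x m n hm hn hlt

lemma lift_sub_const {X : Type*} [TopologicalSpace X] [PreconnectedSpace X] {u v : X → ℝ}
    (hu : Continuous u) (hv : Continuous v)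
    (h : ∀ x, Complex.exp (u x * Complex.I) = Complex.exp (v x * Complex.I)) (x y : X) :
    u x - v x = u y - v y := by
  apply intlike_const (hu.sub hv)
  intro z
  have : Complex.exp ((↑(u z - v z)) * Complex.I) = 1 := by
    push_cast
    rw [sub_mul, Complex.exp_sub, h z, div_self (Complex.exp_ne_zero _)]
  obtain ⟨n, hn⟩ := Complex.exp_eq_one_iff.mp this
  refine ⟨n, ?_⟩
  have hI : ((↑(u z - v z)) : ℂ) = n * (2 * Real.pi) := by
    have h2 : ((↑(u z - v z)) : ℂ) * Complex.I = (↑n * (2 * Real.pi)) * Complex.I := by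
      rw [hn]; ring
    exact mul_right_cancel₀ Complex.I_ne_zero h2
  exact_mod_cast hI

/-- Homotopy lifting for maps `I × I → S¹ ⊆ ℂ`. -/
lemma exists_unitLift (K : C(I × I, ℂ)) (hK : ∀ p, ‖K p‖ = 1) :
    ∃ g : I × I → ℝ, Continuous g ∧ ∀ p, K p = Complex.exp (g p * Complex.I) := by
  have hK0 : ∀ p, K p ≠ 0 := by
    intro p h
    have := hK p
    rw [h] at this
    simp at this
  have hu : UniformContinuous K := CompactSpace.uniformContinuous_of_continuous K.continuous
  obtain ⟨δ, hδ, hδ'⟩ := Metric.uniformContinuous_iff.mp hu 1 one_pos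
  obtain ⟨n, hn⟩ := exists_nat_one_div_lt hδ
  set N : ℕ := n + 1 with hN
  have hNpos : (0:ℝ) < N := by positivity
  set c : ℕ → I := fun k => Set.projIcc (0:ℝ) 1 zero_le_one (k / N) with hc
  set sc : ℕ → I × I → I × I := fun k p => (mulI (c k) p.1, mulI (c k) p.2) with hsc
  have hc0 : c 0 = 0 := by
    simp [hc, Set.projIcc]
  have hcN : c N = 1 := by
    have : ((N:ℝ) / N) = 1 := div_self (ne_of_gt hNpos)
    simp [hc, this, Set.projIcc]
  have hsc0 : ∀ p, sc 0 p = ((0:I), (0:I)) := by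
    intro p
    simp only [hsc, hc0]
    ext <;> simp [mulI]
  have hscN : ∀ p, sc N p = p := by
    intro p
    simp only [hsc, hcN]
    ext <;> simp [mulI]
  have hcdist : ∀ k : ℕ, dist (c (k+1)) (c k) ≤ 1 / N := by
    intro k
    have hl := (LipschitzWith.projIcc (zero_le_one (α := ℝ))).dist_le_mul
      (((k:ℝ)+1) / N) ((k:ℝ) / N)
    calc dist (c (k+1)) (c k) ≤ 1 * dist (((k:ℝ)+1)/N) ((k:ℝ)/N) := by
          simpa [hc] using hl
      _ = 1 / N := by
          have h1 : ((k:ℝ)+1) - k = 1 := by ring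
          rw [one_mul, Real.dist_eq, div_sub_div_same, h1,
            _root_.abs_of_nonneg (by positivity)]
  have hdist : ∀ (k : ℕ) (p : I × I), dist (sc (k+1) p) (sc k p) ≤ 1 / N := by
    intro k p
    have hcomp : ∀ x : I, dist (mulI (c (k+1)) x) (mulI (c k) x) ≤ 1 / N := by
      intro x
      have : dist (mulI (c (k+1)) x) (mulI (c k) x)
          = |((c (k+1) : ℝ) - (c k : ℝ))| * |(x:ℝ)| := by
        rw [Subtype.dist_eq, Real.dist_eq]
        simp only [mulI]
        rw [← sub_mul, abs_mul]
      rw [this]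
      calc |((c (k+1) : ℝ) - (c k : ℝ))| * |(x:ℝ)|
          ≤ |((c (k+1) : ℝ) - (c k : ℝ))| * 1 := by
            apply mul_le_mul_of_nonneg_left _ (abs_nonneg _)
            rw [_root_.abs_of_nonneg x.2.1]; exact x.2.2
        _ ≤ 1 / N := by
            rw [mul_one]
            have := hcdist k
            rwa [Subtype.dist_eq, Real.dist_eq] at this
    rw [Prod.dist_eq]
    exact max_le (hcomp p.1) (hcomp p.2)
  have hsmall : ∀ (k : ℕ) (p : I × I), dist (K (sc (k+1) p)) (K (sc k p)) < 1 := by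
    intro k p
    apply hδ'
    calc dist (sc (k+1) p) (sc k p) ≤ 1 / N := hdist k p
      _ < δ := by exact_mod_cast hn
  set r : ℕ → I × I → ℂ := fun k p => K (sc (k+1) p) / K (sc k p) with hr
  have habs_r : ∀ k p, ‖r k p‖ = 1 := by
    intro k p
    simp [hr, norm_div, hK]
  have hre : ∀ k p, 0 < (r k p).re := by
    intro k p
    have h1 : ‖r k p - 1‖ < 1 := by
      have : r k p - 1 = (K (sc (k+1) p) - K (sc k p)) / K (sc k p) := by
        rw [hr]
        rw [sub_div, div_self (hK0 _)]
      rw [this, norm_div, hK]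
      simpa [Complex.dist_eq] using hsmall k p
    by_contra hle
    push_neg at hle
    have : (1:ℝ) ≤ |(r k p - 1).re| := by
      simp only [Complex.sub_re, Complex.one_re]
      rw [abs_of_nonpos (by linarith)]
      linarith
    have h2 := Complex.abs_re_le_norm (r k p - 1)
    linarith
  set g : I × I → ℝ := fun p =>
    Complex.arg (K ((0:I), (0:I))) + ∑ k ∈ Finset.range N, Complex.arg (r k p) with hg
  have hexp_arg : ∀ z : ℂ, ‖z‖ = 1 → Complex.exp (Complex.arg z * Complex.I) = z := by
    intro z hz
    have := Complex.norm_mul_exp_arg_mul_I z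
    rwa [hz, Complex.ofReal_one, one_mul] at this
  have hpartial : ∀ (m : ℕ), m ≤ N → ∀ p,
      Complex.exp ((Complex.arg (K ((0:I), (0:I)))
        + ∑ k ∈ Finset.range m, Complex.arg (r k p)) * Complex.I) = K (sc m p) := by
    intro m
    induction m with
    | zero =>
      intro _ p
      simp only [Finset.range_zero, Finset.sum_empty]
      rw [Complex.ofReal_zero, add_zero, hexp_arg _ (hK _), hsc0]
    | succ m ih =>
      intro hm p
      have ihm := ih (Nat.le_of_succ_le hm) p
      rw [Finset.sum_range_succ, Complex.ofReal_add, ← add_assoc, add_mul, Complex.exp_add,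
        ihm, hexp_arg _ (habs_r m p), hr]
      rw [mul_comm, div_mul_cancel₀ _ (hK0 _)]
  refine ⟨g, ?_, ?_⟩
  · apply Continuous.add continuous_const
    apply continuous_finset_sum
    intro k _
    have hsc_cont : Continuous (sc k) := by
      apply Continuous.prodMk
      · exact (Continuous.subtype_mk (continuous_const.mul
          (continuous_subtype_val.comp continuous_fst)) _)
      · exact (Continuous.subtype_mk (continuous_const.mul
          (continuous_subtype_val.comp continuous_snd)) _)
    have hsc_cont' : Continuous (sc (k+1)) := by
      apply Continuous.prodMk
      · exact (Continuous.subtype_mk (continuous_const.mul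
          (continuous_subtype_val.comp continuous_fst)) _)
      · exact (Continuous.subtype_mk (continuous_const.mul
          (continuous_subtype_val.comp continuous_snd)) _)
    have hr_cont : Continuous (r k) :=
      (K.continuous.comp hsc_cont').div (K.continuous.comp hsc_cont) (fun p => hK0 _)
    rw [continuous_iff_continuousAt]
    intro p
    exact (Complex.continuousAt_arg (Or.inl (hre k p))).comp hr_cont.continuousAt
  · intro p
    have := hpartial N le_rfl p
    rw [hscN] at this
    rw [hg]
    simp only [Complex.ofReal_add]
    exact this.symm

/-- the "tent" map `t ↦ |2t - 1|` on the unit interval -/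
def vee (t : I) : I :=
  ⟨|2*(t:ℝ) - 1|, abs_nonneg _,
    abs_le.2 ⟨by linarith [t.2.1], by linarith [t.2.2]⟩⟩

lemma vee_continuous : Continuous vee :=
  Continuous.subtype_mk (((continuous_const.mul continuous_subtype_val).sub
    continuous_const).abs) _

lemma vee_coe (t : I) : (vee t : ℝ) = |2*(t:ℝ) - 1| := rfl

lemma vee_zero : vee 0 = 1 := by
  ext
  simp [vee_coe]

lemma vee_one : vee 1 = 1 := by
  ext
  rw [vee_coe]
  norm_num



variable {A B : Type*} [TopologicalSpace A] [DiscreteTopology A]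
  [TopologicalSpace B] [DiscreteTopology B]

/-- vertical segments in the join -/
def seg (x : A) (y : B) : Path (Quot.mk (JoinRel A B) (x, y, 0)) (Quot.mk (JoinRel A B) (x, y, 1)) where
  toFun := fun t => Quot.mk _ (x, y, t)
  continuous_toFun := by
    apply Continuous.comp continuous_quot_mk
    exact continuous_const.prodMk (continuous_const.prodMk continuous_id)
  source' := rfl
  target' := rfl

/-- partial vertical segments -/
def upSeg (x : A) (y : B) (t : I) :
    Path (Quot.mk (JoinRel A B) (x, y, t)) (Quot.mk (JoinRel A B) (x, y, 1)) where
  toFun := fun s => Quot.mk _ (x, y, ⟨max (t:ℝ) s, le_trans t.2.1 (le_max_left _ _),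
    max_le t.2.2 s.2.2⟩)
  continuous_toFun := by
    apply Continuous.comp continuous_quot_mk
    apply Continuous.prodMk continuous_const
    apply Continuous.prodMk continuous_const
    exact Continuous.subtype_mk (continuous_const.max continuous_subtype_val) _
  source' := by
    apply congrArg (Quot.mk (JoinRel A B))
    apply congrArg (fun s : I => (x, y, s))
    exact Subtype.ext (by simp [max_eq_left t.2.1])
  target' := by
    apply congrArg (Quot.mk (JoinRel A B))
    apply congrArg (fun s : I => (x, y, s))
    exact Subtype.ext (by simp [max_eq_right t.2.2])

lemma joined_to_base (a : A) (b : B) (z : TopJoin A B) :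
    Joined z (Quot.mk _ (a, b, 1)) := by
  induction z using Quot.ind with
  | _ p =>
    obtain ⟨x, y, t⟩ := p
    have J1 : Joined (Quot.mk (JoinRel A B) (x, y, t)) (Quot.mk _ (x, y, 1)) := ⟨upSeg x y t⟩
    have e1 : Quot.mk (JoinRel A B) (x, y, 1) = Quot.mk _ (a, y, 1) :=
      Quot.sound (JoinRel.one x a y)
    have J2 : Joined (Quot.mk (JoinRel A B) (a, y, 1)) (Quot.mk _ (a, y, 0)) := ⟨(seg a y).symm⟩
    have e2 : Quot.mk (JoinRel A B) (a, y, 0) = Quot.mk _ (a, b, 0) :=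
      Quot.sound (JoinRel.zero a y b)
    have J3 : Joined (Quot.mk (JoinRel A B) (a, b, 0)) (Quot.mk _ (a, b, 1)) := ⟨seg a b⟩
    rw [e1] at J1
    rw [e2] at J2
    exact (J1.trans J2).trans J3

lemma tj_pathConnected (a : A) (b : B) : PathConnectedSpace (TopJoin A B) := by
  refine ⟨⟨Quot.mk _ (a, b, 1)⟩, fun x y => ?_⟩
  exact (joined_to_base a b x).trans (joined_to_base a b y).symm

lemma tj_not_simplyConnected (a a' : A) (b b' : B) (ha : a ≠ a') (hb : b ≠ b') :
    ¬ SimplyConnectedSpace (TopJoin A B) := by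
  intro hsc
  classical
  set α : A → ℝ := fun x => if x = a' then 1/2 else 0 with hα
  set β : A → B → ℝ := fun x y => if y = b' then (if x = a then -(1/4) else 3/4) else 1/4 with hβ
  set θ : A × B × I → ℝ :=
    fun p => 2 * Real.pi * ((1 - (p.2.2:ℝ)) * α p.1 + (p.2.2:ℝ) * β p.1 p.2.1) with hθdef
  set F : A × B × I → ℂ := fun p => Complex.exp (θ p * Complex.I) with hFdef
  have hexp2 : ∀ u v : ℝ, (∃ n : ℤ, u = v + n * (2*Real.pi)) →
      Complex.exp ((u:ℂ)*Complex.I) = Complex.exp ((v:ℂ)*Complex.I) := by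
    rintro u v ⟨n, rfl⟩
    rw [Complex.exp_eq_exp_iff_exists_int]
    exact ⟨n, by push_cast; ring⟩
  have hresp : ∀ p q, JoinRel A B p q → F p = F q := by
    intro p q h
    cases h with
    | zero x y y' =>
      apply hexp2
      refine ⟨0, ?_⟩
      simp [hθdef]
    | one x x' y =>
      apply hexp2
      by_cases hy : y = b'
      · subst hy
        by_cases hx : x = a <;> by_cases hx' : x' = a
        · exact ⟨0, by simp [hθdef, hβ, hx, hx']⟩
        · refine ⟨-1, ?_⟩
          simp [hθdef, hβ, hx, hx']
          ring
        · refine ⟨1, ?_⟩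
          simp [hθdef, hβ, hx, hx']
          ring
        · exact ⟨0, by simp [hθdef, hβ, hx, hx']⟩
      · exact ⟨0, by simp [hθdef, hβ, hy]⟩
  have hθc : Continuous θ := by
    apply continuous_const.mul
    apply Continuous.add
    · exact (continuous_const.sub
        (continuous_subtype_val.comp (continuous_snd.comp continuous_snd))).mul
        ((continuous_of_discreteTopology (f := α)).comp continuous_fst)
    · exact (continuous_subtype_val.comp (continuous_snd.comp continuous_snd)).mul
        ((continuous_of_discreteTopology (f := fun q : A × B => β q.1 q.2)).comp
          (continuous_fst.prodMk (continuous_fst.comp continuous_snd)))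
  have hFc : Continuous F :=
    Complex.continuous_exp.comp ((Complex.continuous_ofReal.comp hθc).mul continuous_const)
  set f : TopJoin A B → ℂ := Quot.lift F hresp with hfdef
  have hfc : Continuous f := continuous_quot_lift hresp hFc
  have hfabs : ∀ z, ‖f z‖ = 1 := by
    intro z
    induction z using Quot.ind with
    | _ p => exact Complex.norm_exp_ofReal_mul_I _
  -- the values of θ
  have hθab : ∀ v : I, θ (a, b, v) = Real.pi * (v:ℝ) / 2 := by
    intro v
    simp [hθdef, hα, hβ, ha, hb]
    ring
  have hθab' : ∀ v : I, θ (a, b', v) = -(Real.pi * (v:ℝ)) / 2 := by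
    intro v
    simp [hθdef, hα, hβ, ha]
    ring
  have hθa'b : ∀ v : I, θ (a', b, v) = Real.pi - Real.pi * (v:ℝ) / 2 := by
    intro v
    simp [hθdef, hα, hβ, hb]
    ring
  have hθa'b' : ∀ v : I, θ (a', b', v) = Real.pi + Real.pi * (v:ℝ) / 2 := by
    intro v
    simp [hθdef, hα, hβ, Ne.symm ha]
    ring
  -- the two paths
  set x₀ : TopJoin A B := Quot.mk _ (a, b, 1) with hx₀
  set x₁ : TopJoin A B := Quot.mk _ (a, b', 1) with hx₁
  have q1cont : Continuous (fun t : I => if (t:ℝ) ≤ 1/2 then Quot.mk (JoinRel A B) (a, b, vee t)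
      else Quot.mk (JoinRel A B) (a, b', vee t)) := by
    apply Continuous.if_le
    · exact continuous_quot_mk.comp
        (continuous_const.prodMk (continuous_const.prodMk vee_continuous))
    · exact continuous_quot_mk.comp
        (continuous_const.prodMk (continuous_const.prodMk vee_continuous))
    · exact continuous_subtype_val
    · exact continuous_const
    · intro t ht
      have hv : vee t = 0 := Subtype.ext (by rw [vee_coe, ht]; norm_num)
      rw [hv]
      exact Quot.sound (JoinRel.zero a b b')
  have q2cont : Continuous (fun t : I => if (t:ℝ) ≤ 1/2 then Quot.mk (JoinRel A B) (a', b, vee t)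
      else Quot.mk (JoinRel A B) (a', b', vee t)) := by
    apply Continuous.if_le
    · exact continuous_quot_mk.comp
        (continuous_const.prodMk (continuous_const.prodMk vee_continuous))
    · exact continuous_quot_mk.comp
        (continuous_const.prodMk (continuous_const.prodMk vee_continuous))
    · exact continuous_subtype_val
    · exact continuous_const
    · intro t ht
      have hv : vee t = 0 := Subtype.ext (by rw [vee_coe, ht]; norm_num)
      rw [hv]
      exact Quot.sound (JoinRel.zero a' b b')
  have h0le : ((0:I):ℝ) ≤ 1/2 := by norm_num
  have h1nle : ¬ ((1:I):ℝ) ≤ 1/2 := by norm_num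
  set q₁ : Path x₀ x₁ :=
    { toFun := fun t => if (t:ℝ) ≤ 1/2 then Quot.mk (JoinRel A B) (a, b, vee t)
        else Quot.mk (JoinRel A B) (a, b', vee t)
      continuous_toFun := q1cont
      source' := by
        show (if ((0:I):ℝ) ≤ 1/2 then Quot.mk (JoinRel A B) (a, b, vee 0)
          else Quot.mk (JoinRel A B) (a, b', vee 0)) = x₀
        rw [if_pos h0le, vee_zero]
      target' := by
        show (if ((1:I):ℝ) ≤ 1/2 then Quot.mk (JoinRel A B) (a, b, vee 1)
          else Quot.mk (JoinRel A B) (a, b', vee 1)) = x₁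
        rw [if_neg h1nle, vee_one] } with hq₁def
  set q₂ : Path x₀ x₁ :=
    { toFun := fun t => if (t:ℝ) ≤ 1/2 then Quot.mk (JoinRel A B) (a', b, vee t)
        else Quot.mk (JoinRel A B) (a', b', vee t)
      continuous_toFun := q2cont
      source' := by
        show (if ((0:I):ℝ) ≤ 1/2 then Quot.mk (JoinRel A B) (a', b, vee 0)
          else Quot.mk (JoinRel A B) (a', b', vee 0)) = x₀
        rw [if_pos h0le, vee_zero]
        exact (Quot.sound (JoinRel.one a a' b)).symm
      target' := by
        show (if ((1:I):ℝ) ≤ 1/2 then Quot.mk (JoinRel A B) (a', b, vee 1)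
          else Quot.mk (JoinRel A B) (a', b', vee 1)) = x₁
        rw [if_neg h1nle, vee_one]
        exact (Quot.sound (JoinRel.one a a' b')).symm } with hq₂def
  -- the values of f along the paths
  have hfq1 : ∀ t : I, f (q₁ t)
      = Complex.exp ((Real.pi * (1 - 2*(t:ℝ))/2 : ℝ) * Complex.I) := by
    intro t
    show f (if (t:ℝ) ≤ 1/2 then Quot.mk (JoinRel A B) (a, b, vee t)
        else Quot.mk (JoinRel A B) (a, b', vee t)) = _
    by_cases ht : (t:ℝ) ≤ 1/2
    · refine (congrArg f (if_pos ht)).trans ?_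
      show Complex.exp ((θ (a, b, vee t) : ℝ) * Complex.I) = _
      have : θ (a, b, vee t) = Real.pi * (1 - 2*(t:ℝ))/2 := by
        rw [hθab, vee_coe, _root_.abs_of_nonpos (by linarith)]
        ring
      rw [this]
    · refine (congrArg f (if_neg ht)).trans ?_
      show Complex.exp ((θ (a, b', vee t) : ℝ) * Complex.I) = _
      have : θ (a, b', vee t) = Real.pi * (1 - 2*(t:ℝ))/2 := by
        rw [hθab', vee_coe, _root_.abs_of_nonneg (by linarith)]
        ring
      rw [this]
  have hfq2 : ∀ t : I, f (q₂ t)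
      = Complex.exp ((Real.pi/2 + Real.pi * (t:ℝ) : ℝ) * Complex.I) := by
    intro t
    show f (if (t:ℝ) ≤ 1/2 then Quot.mk (JoinRel A B) (a', b, vee t)
        else Quot.mk (JoinRel A B) (a', b', vee t)) = _
    by_cases ht : (t:ℝ) ≤ 1/2
    · refine (congrArg f (if_pos ht)).trans ?_
      show Complex.exp ((θ (a', b, vee t) : ℝ) * Complex.I) = _
      have : θ (a', b, vee t) = Real.pi/2 + Real.pi * (t:ℝ) := by
        rw [hθa'b, vee_coe, _root_.abs_of_nonpos (by linarith)]
        ring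
      rw [this]
    · refine (congrArg f (if_neg ht)).trans ?_
      show Complex.exp ((θ (a', b', vee t) : ℝ) * Complex.I) = _
      have : θ (a', b', vee t) = Real.pi/2 + Real.pi * (t:ℝ) := by
        rw [hθa'b', vee_coe, _root_.abs_of_nonneg (by linarith)]
        ring
      rw [this]
  -- extract homotopy
  haveI := hsc
  have hsub : Subsingleton (Path.Homotopic.Quotient x₀ x₁) := inferInstance
  have hhom : Path.Homotopic q₁ q₂ :=
    Quotient.exact (@Subsingleton.elim _ hsub ⟦q₁⟧ ⟦q₂⟧)
  obtain ⟨H⟩ := hhom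
  set K : C(I × I, ℂ) := ⟨fun p => f (H p), hfc.comp H.continuous⟩ with hKdef
  obtain ⟨g, hgc, hge⟩ := exists_unitLift K (fun p => hfabs _)
  have hge' : ∀ p : I × I, Complex.exp ((g p : ℝ) * Complex.I) = f (H p) :=
    fun p => (hge p).symm
  -- sides are constant
  have hside : ∀ s : I, g (s, 0) = g (0, 0) ∧ g (s, 1) = g (0, 1) := by
    intro s
    constructor
    · have h := lift_sub_const (u := fun s : I => g (s, 0)) (v := fun _ : I => g (0, 0))
        (hgc.comp (continuous_id.prodMk continuous_const)) continuous_const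
        (fun s' => by
          rw [hge' (s', (0:I)), hge' ((0:I), (0:I)), H.source s', H.source 0]) s 0
      linarith [h]
    · have h := lift_sub_const (u := fun s : I => g (s, 1)) (v := fun _ : I => g (0, 1))
        (hgc.comp (continuous_id.prodMk continuous_const)) continuous_const
        (fun s' => by
          rw [hge' (s', (1:I)), hge' ((0:I), (1:I)), H.target s', H.target 0]) s 0
      linarith [h]
  -- winding along the two paths
  have hW1 : g ((0:I), (1:I)) - g ((0:I), (0:I)) = -Real.pi := by
    have h := lift_sub_const (u := fun t : I => g (0, t))
      (v := fun t : I => Real.pi * (1 - 2*(t:ℝ))/2)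
      (hgc.comp (continuous_const.prodMk continuous_id))
      (((continuous_const.mul (continuous_const.sub
        (continuous_const.mul continuous_subtype_val)))).div_const 2)
      (fun t => by
        rw [hge' ((0:I), t)]
        have h0 : H ((0:I), t) = q₁ t := H.apply_zero t
        rw [h0]
        exact hfq1 t) 1 0
    simp only [Set.Icc.coe_one, Set.Icc.coe_zero] at h
    have hpi : Real.pi * (1 - 2*(1:ℝ))/2 - (Real.pi * (1 - 2*(0:ℝ))/2) = -Real.pi := by ring
    linarith [h, hpi]
  have hW2 : g ((1:I), (1:I)) - g ((1:I), (0:I)) = Real.pi := by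
    have h := lift_sub_const (u := fun t : I => g (1, t))
      (v := fun t : I => Real.pi/2 + Real.pi * (t:ℝ))
      (hgc.comp (continuous_const.prodMk continuous_id))
      (continuous_const.add (continuous_const.mul continuous_subtype_val))
      (fun t => by
        rw [hge' ((1:I), t)]
        have h0 : H ((1:I), t) = q₂ t := H.apply_one t
        rw [h0]
        exact hfq2 t) 1 0
    simp only [Set.Icc.coe_one, Set.Icc.coe_zero] at h
    have hpi : (Real.pi/2 + Real.pi * (1:ℝ)) - (Real.pi/2 + Real.pi * (0:ℝ)) = Real.pi := by ring
    linarith [h, hpi]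
  have h10 := (hside 1).1
  have h11 := (hside 1).2
  rw [h10, h11] at hW2
  have hpi := Real.pi_pos
  linarith [hW1, hW2]


end TopJoinProofAux

end

/-- The join of two nonempty discrete spaces, each having at least two points,
is path-connected but not simply connected. -/
theorem join_discrete_not_simplyConnected {A B : Type*}
    [TopologicalSpace A] [DiscreteTopology A] [TopologicalSpace B] [DiscreteTopology B]
    (hA : ∃ a a' : A, a ≠ a') (hB : ∃ b b' : B, b ≠ b') :
    PathConnectedSpace (TopJoin A B) ∧ ¬ SimplyConnectedSpace (TopJoin A B) := by
  obtain ⟨a, a', ha⟩ := hA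
  obtain ⟨b, b', hb⟩ := hB
  exact ⟨TopJoinProofAux.tj_pathConnected a b,
    TopJoinProofAux.tj_not_simplyConnected a a' b b' ha hb⟩
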